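/- The bounding body B(d) = R₂(d) ⊕ ball(0, r(d)) (Minkowski sum of the inset rectangle R₂(d) with the closed ball of radius r(d) = √(2d² + h²/4)) contains the cuboid [−a/2,a/2]×[−b/2,b/2]×[−h/2,h/2] for every d ∈ [0, b/2]. -/

import Mathlib

open scoped Pointwise

private lemma clamp_abs (t m : ℝ) (hm : 0 ≤ m) : |max (-m) (min m t)| ≤ m := by
  rw [abs_le]
  constructor
  · exact le_max_left _ _
  · exact max_le (by linarith) (le_trans (min_le_left _ _) le_rfl)

private lemma clamp_diff (t m M : ℝ) (ht : |t| ≤ M) (hmM : m ≤ M) (hm : 0 ≤ m) :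
    |t - max (-m) (min m t)| ≤ M - m := by
  rw [abs_le] at ht ⊢
  rcases le_total t m with h1 | h1
  · rcases le_total (-m) t with h2 | h2
    · rw [min_eq_right h1, max_eq_right h2]; constructor <;> linarith
    · rw [max_eq_left (by rw [min_le_iff]; right; exact h2)]
      constructor <;> linarith
  · rw [min_eq_left h1, max_eq_right (by linarith)]
    constructor <;> linarith

theorem cuboid_subset_bounding_body
    (a b h : ℝ) (hba : b ≤ a) (hhb : h ≤ b) (hh : 0 < h)
    (d : ℝ) (hd : d ∈ Set.Icc (0:ℝ) (b / 2)) :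
    let cuboid : Set (EuclideanSpace ℝ (Fin 3)) :=
      {x | |x 0| ≤ a / 2 ∧ |x 1| ≤ b / 2 ∧ |x 2| ≤ h / 2}
    let R2 : Set (EuclideanSpace ℝ (Fin 3)) :=
      {x | |x 0| ≤ a / 2 - d ∧ |x 1| ≤ b / 2 - d ∧ x 2 = 0}
    let r := Real.sqrt (2 * d ^ 2 + h ^ 2 / 4)
    cuboid ⊆ R2 + Metric.closedBall (0 : EuclideanSpace ℝ (Fin 3)) r := by
  intro cuboid R2 r x hx
  obtain ⟨hd0, hdb⟩ := hd
  obtain ⟨hx0, hx1, hx2⟩ := hx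
  have hma : (0:ℝ) ≤ a / 2 - d := by linarith
  have hmb : (0:ℝ) ≤ b / 2 - d := by linarith
  set c0 := max (-(a / 2 - d)) (min (a / 2 - d) (x 0)) with hc0
  set c1 := max (-(b / 2 - d)) (min (b / 2 - d) (x 1)) with hc1
  set y : EuclideanSpace ℝ (Fin 3) := WithLp.toLp 2 ![c0, c1, 0] with hy
  have hy0 : y 0 = c0 := rfl
  have hy1 : y 1 = c1 := rfl
  have hy2 : y 2 = 0 := rfl
  refine Set.mem_add.2 ⟨y, ?_, x - y, ?_, by abel⟩
  · refine ⟨?_, ?_, hy2⟩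
    · rw [hy0]; exact clamp_abs _ _ hma
    · rw [hy1]; exact clamp_abs _ _ hmb
  · rw [Metric.mem_closedBall, dist_zero_right]
    have e0 : |(x - y) 0| ≤ d := by
      have : (x - y) 0 = x 0 - c0 := rfl
      rw [this, hc0]
      have := clamp_diff (x 0) (a / 2 - d) (a / 2) hx0 (by linarith) hma
      linarith [this]
    have e1 : |(x - y) 1| ≤ d := by
      have : (x - y) 1 = x 1 - c1 := rfl
      rw [this, hc1]
      have := clamp_diff (x 1) (b / 2 - d) (b / 2) hx1 (by linarith) hmb
      linarith [this]
    have e2 : |(x - y) 2| ≤ h / 2 := by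
      have : (x - y) 2 = x 2 - 0 := rfl
      rw [this, sub_zero]; exact hx2
    rw [EuclideanSpace.norm_eq]
    refine Real.sqrt_le_sqrt ?_
    rw [Fin.sum_univ_three]
    have s0 := sq_abs ((x - y) 0)
    have s1 := sq_abs ((x - y) 1)
    have s2 := sq_abs ((x - y) 2)
    simp only [Real.norm_eq_abs]
    nlinarith [abs_nonneg ((x - y) 0), abs_nonneg ((x - y) 1), abs_nonneg ((x - y) 2)]
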